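/- In the minority game with 2k+1 players, any two pure Nash equilibria can be connected by a finite chain of pure Nash equilibria in which consecutive profiles differ in exactly one player's action. -/

import Mathlib

open Finset

/-- Payoff in the minority game: player `i` gets `f n` where `n` is the number of
players (including `i`) choosing the same action as `i`.
The action `true` represents `-1`, `false` represents `+1`. -/
def mgPayoff (f : ℕ → ℝ) {N : ℕ} (a : Fin N → Bool) (i : Fin N) : ℝ :=
  f ((Finset.univ.filter fun j => a j = a i).card)

/-- Pure Nash equilibrium of the minority game. -/
def mgPureNE (f : ℕ → ℝ) {N : ℕ} (a : Fin N → Bool) : Prop :=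
  ∀ i : Fin N, mgPayoff f (Function.update a i (!(a i))) i ≤ mgPayoff f a i

/-- Probability of the pure profile `a` under the mixed profile `σ`, where
`σ j` is the probability that player `j` chooses `-1` (i.e. `true`). -/
noncomputable def mgProb {N : ℕ} (σ : Fin N → ℝ) (a : Fin N → Bool) : ℝ :=
  ∏ j, if a j then σ j else 1 - σ j

/-- Expected payoff of player `i` under the mixed profile `σ`. -/
noncomputable def mgEPay (f : ℕ → ℝ) {N : ℕ} (σ : Fin N → ℝ) (i : Fin N) : ℝ :=
  ∑ a : Fin N → Bool, mgProb σ a * f ((Finset.univ.filter fun j => a j = a i).card)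

/-- Mixed Nash equilibrium of the minority game: all probabilities lie in [0,1]
and no player can strictly improve by a unilateral deviation. -/
noncomputable def mgMixedNE (f : ℕ → ℝ) {N : ℕ} (σ : Fin N → ℝ) : Prop :=
  (∀ i, 0 ≤ σ i ∧ σ i ≤ 1) ∧
    ∀ (i : Fin N) (τ : ℝ), 0 ≤ τ → τ ≤ 1 →
      mgEPay f (Function.update σ i τ) i ≤ mgEPay f σ i

lemma flip_filter_card {N : ℕ} (a : Fin N → Bool) (i : Fin N) :
    (univ.filter fun j => Function.update a i (!(a i)) j = Function.update a i (!(a i)) i).card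
      = (univ.filter fun j => a j = !(a i)).card + 1 := by
  have h1 : Function.update a i (!(a i)) i = !(a i) := Function.update_self i (!(a i)) a
  have hset : (univ.filter fun j => Function.update a i (!(a i)) j = Function.update a i (!(a i)) i)
      = insert i (univ.filter fun j => a j = !(a i)) := by
    ext j
    simp only [mem_filter, mem_univ, true_and, mem_insert, h1]
    rcases eq_or_ne j i with rfl | hj
    · simp
    · simp [Function.update_of_ne hj, hj]
  rw [hset, card_insert_of_notMem (by simp)]

lemma mgsum {N : ℕ} (a : Fin N → Bool) :
    (univ.filter fun j => a j = true).card + (univ.filter fun j => a j = false).card = N := by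
  have h := Finset.card_filter_add_card_filter_not
    (s := (univ : Finset (Fin N))) (p := fun j => a j = true)
  simp only [Bool.not_eq_true] at h
  simpa [Finset.card_univ] using h

lemma mgPureNE_iff (k : ℕ) (f : ℕ → ℝ) (hf : StrictAntiOn f (Set.Icc 1 (2 * k + 1)))
    (a : Fin (2 * k + 1) → Bool) :
    mgPureNE f a ↔ ((univ.filter fun j => a j = true).card = k ∨
      (univ.filter fun j => a j = true).card = k + 1) := by
  set t := (univ.filter fun j => a j = true).card with ht
  set s := (univ.filter fun j => a j = false).card with hs
  have hsum : t + s = 2 * k + 1 := mgsum a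
  have hcond : mgPureNE f a ↔
      ∀ i, (univ.filter fun j => a j = a i).card ≤ (univ.filter fun j => a j = !(a i)).card + 1 := by
    unfold mgPureNE mgPayoff
    refine forall_congr' fun i => ?_
    rw [flip_filter_card]
    have h1 : 1 ≤ (univ.filter fun j => a j = a i).card := card_pos.2 ⟨i, by simp⟩
    have h2 : (univ.filter fun j => a j = a i).card ≤ 2 * k + 1 := by
      simpa using card_filter_le (univ : Finset (Fin (2 * k + 1))) _
    have h3 : (univ.filter fun j => a j = !(a i)).card + 1 ≤ 2 * k + 1 := by
      have hsub : (univ.filter fun j => a j = !(a i)) ⊆ univ.erase i := by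
        intro j hj
        simp only [mem_filter, mem_univ, true_and] at hj
        refine mem_erase.2 ⟨?_, mem_univ j⟩
        rintro rfl; simp at hj
      have hc := card_le_card hsub
      have he : (univ.erase i).card = 2 * k := by
        rw [card_erase_of_mem (mem_univ i)]; simp
      omega
    exact hf.le_iff_ge (Set.mem_Icc.2 ⟨by omega, h3⟩) (Set.mem_Icc.2 ⟨h1, h2⟩)
  have hT : ∀ i, a i = true →
      (univ.filter fun j => a j = a i).card = t ∧ (univ.filter fun j => a j = !(a i)).card = s := by
    intro i h
    refine ⟨?_, ?_⟩ <;> simp [h, ht, hs]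
  have hF : ∀ i, a i = false →
      (univ.filter fun j => a j = a i).card = s ∧ (univ.filter fun j => a j = !(a i)).card = t := by
    intro i h
    refine ⟨?_, ?_⟩ <;> simp [h, ht, hs]
  rw [hcond]
  constructor
  · intro h
    by_cases hextrue : ∃ i, a i = true
    · obtain ⟨i, hi⟩ := hextrue
      have h1 := h i
      rw [(hT i hi).1, (hT i hi).2] at h1
      by_cases hexfalse : ∃ i, a i = false
      · obtain ⟨j, hj⟩ := hexfalse
        have h2 := h j
        rw [(hF j hj).1, (hF j hj).2] at h2
        omega
      · push_neg at hexfalse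
        have hs0 : s = 0 := by
          rw [hs, card_eq_zero, filter_eq_empty_iff]
          intro j _
          exact hexfalse j
        omega
    · push_neg at hextrue
      have ht0 : t = 0 := by
        rw [ht, card_eq_zero, filter_eq_empty_iff]
        intro j _
        exact hextrue j
      have i0 : Fin (2 * k + 1) := ⟨0, by omega⟩
      have hi0 : a i0 = false := by
        cases h' : a i0
        · rfl
        · exact absurd h' (hextrue i0)
      have h2 := h i0
      rw [(hF i0 hi0).1, (hF i0 hi0).2] at h2
      omega
  · intro h i
    by_cases hi : a i = true
    · rw [(hT i hi).1, (hT i hi).2]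
      omega
    · have hi' : a i = false := by simpa using hi
      rw [(hF i hi').1, (hF i hi').2]
      omega

/-- Any two pure Nash equilibria of the minority game are connected by a finite
chain of pure Nash equilibria in which consecutive profiles differ in exactly
one player's action. -/
theorem stmt_13 (k : ℕ) (f : ℕ → ℝ) (hf : StrictAntiOn f (Set.Icc 1 (2 * k + 1)))
    (x y : Fin (2 * k + 1) → Bool) (hx : mgPureNE f x) (hy : mgPureNE f y) :
    ∃ (n : ℕ) (c : ℕ → Fin (2 * k + 1) → Bool),
      c 0 = x ∧ c n = y ∧ (∀ m ≤ n, mgPureNE f (c m)) ∧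
        ∀ m < n, (Finset.univ.filter fun j => c m j ≠ c (m + 1) j).card = 1 := by
  have hyc := (mgPureNE_iff k f hf y).1 hy
  have key : ∀ d : ℕ, ∀ x : Fin (2 * k + 1) → Bool, mgPureNE f x →
      (univ.filter fun j => x j ≠ y j).card = d →
      ∃ (n : ℕ) (c : ℕ → Fin (2 * k + 1) → Bool),
        c 0 = x ∧ c n = y ∧ (∀ m ≤ n, mgPureNE f (c m)) ∧
          ∀ m < n, (Finset.univ.filter fun j => c m j ≠ c (m + 1) j).card = 1 := by
    intro d
    induction d with
    | zero =>
      intro x hx hd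
      have hxy : x = y := by
        funext j
        by_contra hne
        have : j ∈ univ.filter fun j => x j ≠ y j := by simp [hne]
        rw [card_eq_zero] at hd
        simp [hd] at this
      exact ⟨0, fun _ => x, rfl, by rw [hxy], fun m _ => hx, fun m hm => absurd hm (by omega)⟩
    | succ d ih =>
      intro x hx hd
      have hxc := (mgPureNE_iff k f hf x).1 hx
      have hxny : x ≠ y := by
        rintro rfl
        simp at hd
      -- find a coordinate to flip
      have hexists : ∃ i, x i ≠ y i ∧
          mgPureNE f (Function.update x i (!(x i))) := by
        rcases hxc with hk | hk1
        · -- t = k : find i with x i = false, y i = true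
          have : ∃ i, x i = false ∧ y i = true := by
            by_contra hcon
            push_neg at hcon
            have hsub : (univ.filter fun j => y j = true) ⊆ (univ.filter fun j => x j = true) := by
              intro j hj
              simp only [mem_filter, mem_univ, true_and] at *
              cases h' : x j
              · exact absurd hj (hcon j h')
              · rfl
            have hle : (univ.filter fun j => x j = true).card ≤
                (univ.filter fun j => y j = true).card := by
              rcases hyc with h' | h' <;> omega
            have heq : (univ.filter fun j => y j = true) = (univ.filter fun j => x j = true) :=
              eq_of_subset_of_card_le hsub hle
            refine hxny (funext fun j => ?_)
            have hj := Finset.ext_iff.1 heq j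
            simp only [mem_filter, mem_univ, true_and] at hj
            cases h1 : x j <;> cases h2 : y j <;> simp_all
          obtain ⟨i, hxi, hyi⟩ := this
          refine ⟨i, by rw [hxi, hyi]; simp, ?_⟩
          rw [mgPureNE_iff k f hf]
          right
          have hset : (univ.filter fun j => Function.update x i (!(x i)) j = true)
              = insert i (univ.filter fun j => x j = true) := by
            ext j
            simp only [mem_filter, mem_univ, true_and, mem_insert]
            rcases eq_or_ne j i with rfl | hj
            · simp [Function.update_self, hxi]
            · simp [Function.update_of_ne hj, hj]
          rw [hset, card_insert_of_notMem (by simp [hxi]), hk]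
        · -- t = k+1 : find i with x i = true, y i = false
          have : ∃ i, x i = true ∧ y i = false := by
            by_contra hcon
            push_neg at hcon
            have hsub : (univ.filter fun j => x j = true) ⊆ (univ.filter fun j => y j = true) := by
              intro j hj
              simp only [mem_filter, mem_univ, true_and] at *
              cases h' : y j
              · exact absurd h' (hcon j hj)
              · rfl
            have hle : (univ.filter fun j => y j = true).card ≤
                (univ.filter fun j => x j = true).card := by
              rcases hyc with h' | h' <;> omega
            have heq : (univ.filter fun j => x j = true) = (univ.filter fun j => y j = true) :=
              eq_of_subset_of_card_le hsub hle
            refine hxny (funext fun j => ?_)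
            have hj := Finset.ext_iff.1 heq j
            simp only [mem_filter, mem_univ, true_and] at hj
            cases h1 : x j <;> cases h2 : y j <;> simp_all
          obtain ⟨i, hxi, hyi⟩ := this
          refine ⟨i, by rw [hxi, hyi]; simp, ?_⟩
          rw [mgPureNE_iff k f hf]
          left
          have hset : (univ.filter fun j => Function.update x i (!(x i)) j = true)
              = (univ.filter fun j => x j = true).erase i := by
            ext j
            simp only [mem_filter, mem_univ, true_and, mem_erase]
            rcases eq_or_ne j i with rfl | hj
            · simp [Function.update_self, hxi]
            · simp [Function.update_of_ne hj, hj]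
          rw [hset, card_erase_of_mem (by simp [hxi]), hk1]
          omega
      obtain ⟨i, hdi, hNE'⟩ := hexists
      set x' := Function.update x i (!(x i)) with hx'def
      have hyieq : y i = !(x i) := by
        cases h1 : x i <;> cases h2 : y i <;> simp_all
      have hdist : (univ.filter fun j => x' j ≠ y j).card = d := by
        have hset : (univ.filter fun j => x' j ≠ y j)
            = (univ.filter fun j => x j ≠ y j).erase i := by
          ext j
          simp only [mem_filter, mem_univ, true_and, mem_erase]
          rcases eq_or_ne j i with rfl | hj
          · simp [hx'def, Function.update_self, hyieq]
          · simp [hx'def, Function.update_of_ne hj, hj]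
        rw [hset, card_erase_of_mem (by simp [hdi]), hd]
        omega
      obtain ⟨n, c, hc0, hcn, hNE, hstep⟩ := ih x' hNE' hdist
      set c' : ℕ → Fin (2 * k + 1) → Bool := fun m => if m = 0 then x else c (m - 1) with hc'def
      have hc'0 : c' 0 = x := rfl
      have hc'succ : ∀ m, c' (m + 1) = c m := fun m => rfl
      have hc'1 : c' 1 = c 0 := rfl
      refine ⟨n + 1, c', hc'0, (hc'succ n).trans hcn, ?_, ?_⟩
      · intro m hm
        cases m with
        | zero => rw [hc'0]; exact hx
        | succ m' => rw [hc'succ]; exact hNE m' (by omega)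
      · intro m hm
        cases m with
        | zero =>
          have hset : (univ.filter fun j => c' 0 j ≠ c' (0 + 1) j) = {i} := by
            simp only [hc'0]
            have : c' (0 + 1) = x' := hc'1.trans hc0
            rw [this]
            ext j
            simp only [mem_filter, mem_univ, true_and, mem_singleton]
            rcases eq_or_ne j i with rfl | hj
            · simp [hx'def, Function.update_self]
            · simp [hx'def, Function.update_of_ne hj, hj]
          rw [hset, card_singleton]
        | succ m' =>
          have h1 : c' (m' + 1) = c m' := hc'succ m'
          have h2 : c' (m' + 1 + 1) = c (m' + 1) := hc'succ (m' + 1)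
          simp only [h1, h2]
          exact hstep m' (by omega)
  exact key _ x hx rfl
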